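/- For every integer n \geq 1 and real u, the derivative of the Bessel polynomial satisfies q_n'(u) = q_n(u) - (u / (2n-1)) * q_{n-1}(u). -/

import Mathlib

open Finset

/-- The Bessel polynomial `q_n(u)`. -/
noncomputable def qBessel (n : ℕ) (u : ℝ) : ℝ :=
  ∑ k ∈ Finset.range (n + 1),
    ((n.factorial * (2 * n - k).factorial * 2 ^ k : ℝ) /
      ((2 * n).factorial * (n - k).factorial * k.factorial)) * u ^ k

/-- The coefficients of the Bessel polynomial. -/
noncomputable def qc (n k : ℕ) : ℝ :=
  (n.factorial * (2 * n - k).factorial * 2 ^ k : ℝ) /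
      ((2 * n).factorial * (n - k).factorial * k.factorial)

lemma key_mid (l j : ℕ) :
    ((l:ℝ) + 2) * qc (l + j + 2) (l + 2)
      = qc (l + j + 2) (l + 1) - qc (l + j + 1) l / (2 * ((l:ℝ) + j + 2) - 1) := by
  have e1 : 2 * (l + j + 2) - (l + 2) = l + 2*j + 2 := by omega
  have e2 : 2 * (l + j + 2) - (l + 1) = l + 2*j + 3 := by omega
  have e3 : 2 * (l + j + 1) - l = l + 2*j + 2 := by omega
  have e4 : (l + j + 2) - (l + 2) = j := by omega
  have e5 : (l + j + 2) - (l + 1) = j + 1 := by omega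
  have e6 : (l + j + 1) - l = j + 1 := by omega
  unfold qc
  rw [e1, e2, e3, e4, e5, e6]
  have f1 : (l + 2*j + 3).factorial = (l + 2*j + 3) * (l + 2*j + 2).factorial := rfl
  have f2 : (2 * (l + j + 2)).factorial
      = (2*l + 2*j + 4) * ((2*l + 2*j + 3) * (2*l + 2*j + 2).factorial) := by
    rw [show 2 * (l + j + 2) = 2*l + 2*j + 4 by omega]; rfl
  have f3 : (2 * (l + j + 1)).factorial = (2*l + 2*j + 2).factorial := by
    congr 1; omega
  have f4 : (j + 1).factorial = (j + 1) * j.factorial := rfl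
  have f5 : (l + 2).factorial = (l + 2) * ((l + 1) * l.factorial) := rfl
  have f6 : (l + 1).factorial = (l + 1) * l.factorial := rfl
  have f7 : (l + j + 2).factorial = (l + j + 2) * (l + j + 1).factorial := rfl
  rw [f1, f2, f3, f4, f5, f6, f7]
  have p1 : ((l + 2*j + 2).factorial : ℝ) ≠ 0 := by positivity
  have p2 : ((2*l + 2*j + 2).factorial : ℝ) ≠ 0 := by positivity
  have p3 : ((l + j + 1).factorial : ℝ) ≠ 0 := by positivity
  have p4 : (j.factorial : ℝ) ≠ 0 := by positivity
  have p5 : (l.factorial : ℝ) ≠ 0 := by positivity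
  have p6 : (2 * ((l:ℝ) + j + 2) - 1) ≠ 0 := by
    have hl : (0:ℝ) ≤ l := Nat.cast_nonneg l
    have hj : (0:ℝ) ≤ j := Nat.cast_nonneg j
    intro h; linarith
  push_cast
  field_simp
  ring

lemma key_zero (m : ℕ) : qc (m + 1) 1 = qc (m + 1) 0 := by
  unfold qc
  rw [show 2 * (m + 1) - 1 = 2*m + 1 by omega, show (m + 1) - 1 = m from rfl,
    show 2 * (m + 1) - 0 = 2*m + 2 by omega, show (m + 1) - 0 = m + 1 from rfl,
    show (2*m + 2).factorial = (2*m + 2) * (2*m + 1).factorial from rfl,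
    show (m + 1).factorial = (m + 1) * m.factorial from rfl]
  have p1 : ((2*m + 1).factorial : ℝ) ≠ 0 := by positivity
  have p2 : (m.factorial : ℝ) ≠ 0 := by positivity
  push_cast
  field_simp
  ring

lemma key_top (m : ℕ) : qc (m + 1) (m + 1) = qc m m / (2 * ((m:ℝ) + 1) - 1) := by
  unfold qc
  rw [show 2 * (m + 1) - (m + 1) = m + 1 by omega, Nat.sub_self, Nat.sub_self,
    show 2 * m - m = m by omega,
    show (2 * (m+1)).factorial = (2*m + 2) * ((2*m + 1) * (2*m).factorial) by
      rw [show 2 * (m+1) = 2*m + 2 by omega]; rfl,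
    show (m + 1).factorial = (m + 1) * m.factorial from rfl]
  have p1 : ((2*m).factorial : ℝ) ≠ 0 := by positivity
  have p2 : (m.factorial : ℝ) ≠ 0 := by positivity
  have p6 : (2 * ((m:ℝ) + 1) - 1) ≠ 0 := by
    have hm : (0:ℝ) ≤ m := Nat.cast_nonneg m
    intro h; linarith
  push_cast
  field_simp
  have p7 : (1 + (m:ℝ) * 2) ≠ 0 := by positivity
  ring_nf
  field_simp
  ring

lemma qBessel_eq (n : ℕ) : qBessel n = fun v => ∑ k ∈ range (n + 1), qc n k * v ^ k := rfl

theorem qBessel_deriv (n : ℕ) (hn : 1 ≤ n) (u : ℝ) :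
    deriv (qBessel n) u = qBessel n u - u / (2 * (n : ℝ) - 1) * qBessel (n - 1) u := by
  obtain ⟨m, rfl⟩ : ∃ m, n = m + 1 := ⟨n - 1, by omega⟩
  rw [qBessel_eq, qBessel_eq]
  simp only [Nat.add_sub_cancel]
  -- compute the derivative
  rw [deriv_fun_sum (fun k _ => ((differentiable_pow k).const_mul _).differentiableAt)]
  have hder : ∀ k : ℕ, deriv (fun v : ℝ => qc (m+1) k * v ^ k) u
      = qc (m+1) k * (k * u ^ (k-1)) := by
    intro k; simp [deriv_const_mul_field]
  simp only [hder]
  -- rewrite LHS as a sum over range (m+2) with special value at m+1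
  have hL : ∑ k ∈ range (m + 1 + 1), qc (m+1) k * (k * u ^ (k-1))
      = ∑ k ∈ range (m + 2),
          (if k = m + 1 then 0 else qc (m+1) (k+1) * (((k:ℝ)+1) * u ^ k)) := by
    rw [Finset.sum_range_succ' (fun k => qc (m+1) k * (k * u ^ (k-1))),
      Finset.sum_range_succ (fun k =>
        if k = m + 1 then 0 else qc (m+1) (k+1) * (((k:ℝ)+1) * u ^ k))]
    simp only [eq_self_iff_true, if_true, Nat.cast_zero, zero_mul, mul_zero, add_zero]
    refine Finset.sum_congr rfl fun k hk => ?_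
    rw [Finset.mem_range] at hk
    rw [if_neg (by omega)]
    push_cast
    ring
  rw [hL]
  -- rewrite the subtracted sum
  have hG : u / (2 * ((m:ℝ) + 1) - 1) * ∑ k ∈ range (m + 1), qc m k * u ^ k
      = ∑ k ∈ range (m + 2),
          (if k = 0 then 0 else qc m (k-1) / (2 * ((m:ℝ) + 1) - 1) * u ^ k) := by
    rw [Finset.mul_sum, Finset.sum_range_succ' (fun k =>
      if k = 0 then 0 else qc m (k-1) / (2 * ((m:ℝ) + 1) - 1) * u ^ k)]
    simp only [Nat.succ_ne_zero, ite_false, ite_true, Nat.add_sub_cancel, add_zero]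
    refine Finset.sum_congr rfl fun k hk => ?_
    ring
  push_cast
  rw [hG, ← Finset.sum_sub_distrib]
  refine Finset.sum_congr rfl fun k hk => ?_
  rw [Finset.mem_range] at hk
  rcases eq_or_ne k (m + 1) with rfl | hkm
  · rw [if_pos rfl, if_neg (Nat.succ_ne_zero _), Nat.add_sub_cancel, key_top]
    ring
  · rw [if_neg hkm]
    rcases Nat.eq_zero_or_pos k with rfl | hk0
    · rw [if_pos rfl, key_zero]
      push_cast; ring
    · rw [if_neg (by omega)]
      obtain ⟨l, rfl⟩ : ∃ l, k = l + 1 := ⟨k - 1, by omega⟩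
      obtain ⟨j, rfl⟩ : ∃ j, m = l + j + 1 := ⟨m - l - 1, by omega⟩
      have h := key_mid l j
      push_cast
      show qc (l + j + 2) (l + 2) * (((l:ℝ) + 1 + 1) * u ^ (l + 1))
          = qc (l + j + 2) (l + 1) * u ^ (l + 1)
            - qc (l + j + 1) l / (2 * ((l:ℝ) + ↑j + 1 + 1) - 1) * u ^ (l + 1)
      rw [show (2 * ((l:ℝ) + ↑j + 1 + 1) - 1) = 2 * ((l:ℝ) + ↑j + 2) - 1 by ring,
        ← sub_mul, ← h]
      ring
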